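/- Let f : Y → X and g : Z → X be C¹ maps of Banach manifolds. Then the set of transversal points of the fibered product Y ×_X Z is open in Y ×_X Z. -/

import Mathlib

open ContinuousLinearMap

/-- The split-surjection condition is equivalent to having a continuous right inverse. -/
lemma splitSurj_iff_rightInv {E F : Type*} [NormedAddCommGroup E] [NormedSpace ℝ E]
    [CompleteSpace E] [NormedAddCommGroup F] [NormedSpace ℝ F] [CompleteSpace F]
    (T : E →L[ℝ] F) :
    (Function.Surjective ⇑T ∧ ∃ Q : Submodule ℝ E, IsClosed (Q : Set E) ∧
      IsCompl (LinearMap.ker (T : E →ₗ[ℝ] F)) Q) ↔ ∃ S : F →L[ℝ] E, T.comp S = ContinuousLinearMap.id ℝ F := by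
  constructor
  · rintro ⟨hsurj, Q, hQc, hQ⟩
    haveI : CompleteSpace Q := hQc.completeSpace_coe
    set T' : Q →L[ℝ] F := T.comp Q.subtypeL with hT'
    have hinj : LinearMap.ker (T' : Q →ₗ[ℝ] F) = ⊥ := by
      rw [LinearMap.ker_eq_bot']
      rintro ⟨q, hq⟩ h
      have : q ∈ LinearMap.ker (T : E →ₗ[ℝ] F) ⊓ Q := ⟨h, hq⟩
      rw [hQ.inf_eq_bot] at this
      exact Subtype.ext this
    have hsurj' : LinearMap.range (T' : Q →ₗ[ℝ] F) = ⊤ := by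
      rw [LinearMap.range_eq_top]
      intro x
      obtain ⟨e, he⟩ := hsurj x
      obtain ⟨u, v, huv, -⟩ :=
        Submodule.existsUnique_add_of_isCompl hQ e
      refine ⟨v, ?_⟩
      have : T e = T u + T v := by rw [← huv]; simp
      have hu : T u = 0 := u.2
      simp only [hT', ContinuousLinearMap.coe_coe, ContinuousLinearMap.comp_apply, Submodule.subtypeL_apply]
      rw [← he, this, hu, zero_add]
    set e := ContinuousLinearEquiv.ofBijective T' hinj hsurj'
    refine ⟨Q.subtypeL.comp (e.symm : F →L[ℝ] Q), ?_⟩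
    ext x
    have : T' (e.symm x) = x := e.apply_symm_apply x
    simpa [hT'] using this
  · rintro ⟨S, hS⟩
    have hri : Function.RightInverse ⇑S ⇑T := fun x => by
      have := congrArg (fun u => u x) hS; simpa using this
    refine ⟨hri.surjective, ?_⟩
    exact (T.closedComplemented_ker_of_rightInverse S hri).exists_isClosed_isCompl

/-- The set of continuous linear maps admitting a continuous right inverse is open. -/
lemma isOpen_rightInv {E F : Type*} [NormedAddCommGroup E] [NormedSpace ℝ E]
    [NormedAddCommGroup F] [NormedSpace ℝ F] [CompleteSpace F] :
    IsOpen {T : E →L[ℝ] F | ∃ S : F →L[ℝ] E, T.comp S = ContinuousLinearMap.id ℝ F} := by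
  rw [Metric.isOpen_iff]
  rintro T₀ ⟨S, hS⟩
  refine ⟨(‖S‖ + 1)⁻¹, by positivity, ?_⟩
  intro T hT
  rw [Metric.mem_ball, dist_eq_norm] at hT
  -- T ∘ S = 1 - (-(T - T₀) ∘ S), which is a unit
  have hnorm : ‖(T₀ - T).comp S‖ < 1 := by
    calc ‖(T₀ - T).comp S‖ ≤ ‖T₀ - T‖ * ‖S‖ := ContinuousLinearMap.opNorm_comp_le _ _
    _ ≤ ‖T - T₀‖ * ‖S‖ := by rw [norm_sub_rev]
    _ < (‖S‖ + 1)⁻¹ * (‖S‖ + 1) :=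
        mul_lt_mul'' hT (lt_add_one _) (norm_nonneg _) (norm_nonneg _)
    _ = 1 := by rw [inv_mul_cancel₀ (by positivity)]
  set u : Units (F →L[ℝ] F) := Units.oneSub ((T₀ - T).comp S) hnorm
  have hu : (u : F →L[ℝ] F) = T.comp S := by
    have hri : ∀ x, T₀ (S x) = x := fun x => by
      have := congrArg (fun u => u x) hS; simpa using this
    simp only [u, Units.val_oneSub]
    ext x
    simp [sub_apply, comp_apply, hri x]
  refine ⟨S.comp (↑u⁻¹ : F →L[ℝ] F), ?_⟩
  have : T.comp (S.comp (↑u⁻¹ : F →L[ℝ] F)) = (T.comp S).comp (↑u⁻¹ : F →L[ℝ] F) := by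
    ext x; simp [comp_apply]
  rw [this, ← hu]
  exact u.mul_inv

/-- The set of transversal points is open in the fibered product `Y ×_X Z`. -/
theorem stmt_3 {X Y Z : Type*} [NormedAddCommGroup X] [NormedSpace ℝ X] [CompleteSpace X]
    [NormedAddCommGroup Y] [NormedSpace ℝ Y] [CompleteSpace Y]
    [NormedAddCommGroup Z] [NormedSpace ℝ Z] [CompleteSpace Z]
    (f : Y → X) (g : Z → X) (hf : ContDiff ℝ 1 f) (hg : ContDiff ℝ 1 g) :
    IsOpen {p : {q : Y × Z // f q.1 = g q.2} |
      Function.Surjective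
        ⇑((fderiv ℝ f (p : Y × Z).1).comp (ContinuousLinearMap.fst ℝ Y Z)
          - (fderiv ℝ g (p : Y × Z).2).comp (ContinuousLinearMap.snd ℝ Y Z)) ∧
      ∃ Q : Submodule ℝ (Y × Z), IsClosed (Q : Set (Y × Z)) ∧
        IsCompl (LinearMap.ker
          (((fderiv ℝ f (p : Y × Z).1).comp (ContinuousLinearMap.fst ℝ Y Z)
            - (fderiv ℝ g (p : Y × Z).2).comp (ContinuousLinearMap.snd ℝ Y Z)) : Y × Z →ₗ[ℝ] X)) Q} := by
  set D : {q : Y × Z // f q.1 = g q.2} → (Y × Z →L[ℝ] X) := fun p =>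
    (fderiv ℝ f (p : Y × Z).1).comp (ContinuousLinearMap.fst ℝ Y Z)
      - (fderiv ℝ g (p : Y × Z).2).comp (ContinuousLinearMap.snd ℝ Y Z) with hD
  have hcont : Continuous D := by
    apply Continuous.sub
    · exact ((hf.continuous_fderiv one_ne_zero).comp
        (continuous_fst.comp continuous_subtype_val)).clm_comp continuous_const
    · exact ((hg.continuous_fderiv one_ne_zero).comp
        (continuous_snd.comp continuous_subtype_val)).clm_comp continuous_const
  have : {p : {q : Y × Z // f q.1 = g q.2} |
      Function.Surjective ⇑(D p) ∧
      ∃ Q : Submodule ℝ (Y × Z), IsClosed (Q : Set (Y × Z)) ∧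
        IsCompl (LinearMap.ker (D p : Y × Z →ₗ[ℝ] X)) Q}
      = D ⁻¹' {T : Y × Z →L[ℝ] X | ∃ S : X →L[ℝ] Y × Z, T.comp S = ContinuousLinearMap.id ℝ X} := by
    ext p
    exact splitSurj_iff_rightInv (D p)
  rw [show {p : {q : Y × Z // f q.1 = g q.2} |
      Function.Surjective
        ⇑((fderiv ℝ f (p : Y × Z).1).comp (ContinuousLinearMap.fst ℝ Y Z)
          - (fderiv ℝ g (p : Y × Z).2).comp (ContinuousLinearMap.snd ℝ Y Z)) ∧
      ∃ Q : Submodule ℝ (Y × Z), IsClosed (Q : Set (Y × Z)) ∧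
        IsCompl (LinearMap.ker
          (((fderiv ℝ f (p : Y × Z).1).comp (ContinuousLinearMap.fst ℝ Y Z)
            - (fderiv ℝ g (p : Y × Z).2).comp (ContinuousLinearMap.snd ℝ Y Z)) : Y × Z →ₗ[ℝ] X)) Q}
      = D ⁻¹' {T : Y × Z →L[ℝ] X | ∃ S : X →L[ℝ] Y × Z, T.comp S = ContinuousLinearMap.id ℝ X} from this]
  exact isOpen_rightInv.preimage hcont
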